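/- arXiv:2401.09152 — 3 statements merged into one kernel-verified Lean document; each statement's English description precedes it below -/
import Mathlib

section
/- Let P be a zig-zag collection supported by intervals I₁, …, I_ℓ (so consecutive intervals meet in exactly one corner vertex, I₁ and I_ℓ meet in one vertex, the meeting vertices v_i, v_{i+1} of each I_i lie on a common edge interval, and non-consecutive intervals are disjoint). Then ℓ is even. -/
/-- The vertex `v` is a diagonal corner of the interval `[a,b]` of `ℤ²`. -/
def IsDiagCorner (a b v : ℤ × ℤ) : Prop := v = a ∨ v = b

/-- The vertex `v` is an anti-diagonal corner of the interval `[a,b]` of `ℤ²`. -/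
def IsAntiDiagCorner (a b v : ℤ × ℤ) : Prop := v = (a.1, b.2) ∨ v = (b.1, a.2)

instance (a b v : ℤ × ℤ) : Decidable (IsDiagCorner a b v) := by
  unfold IsDiagCorner; infer_instance

instance (a b v : ℤ × ℤ) : Decidable (IsAntiDiagCorner a b v) := by
  unfold IsAntiDiagCorner; infer_instance

/-- A proper interval cannot have a vertex that is both a diagonal and an
anti-diagonal corner. -/
lemma not_diag_and_anti (a b w : ℤ × ℤ) (hp : a.1 < b.1 ∧ a.2 < b.2) :
    ¬ (IsDiagCorner a b w ∧ IsAntiDiagCorner a b w) := by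
  rintro ⟨h1 | h1, h2 | h2⟩ <;> subst h1 <;>
    simp only [Prod.ext_iff] at h2 <;> omega

/-- If two proper intervals meet in exactly one point, that point is a corner of
the same type (diagonal or anti-diagonal) of both. -/
lemma corner_match (a b a' b' w : ℤ × ℤ)
    (hp : a.1 < b.1 ∧ a.2 < b.2) (hp' : a'.1 < b'.1 ∧ a'.2 < b'.2)
    (h : Set.Icc a b ∩ Set.Icc a' b' = {w}) :
    (IsDiagCorner a b w ∧ IsDiagCorner a' b' w) ∨
    (IsAntiDiagCorner a b w ∧ IsAntiDiagCorner a' b' w) := by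
  have hw : w ∈ Set.Icc a b ∩ Set.Icc a' b' := by rw [h]; rfl
  obtain ⟨⟨hav, hvb⟩, ⟨hav', hvb'⟩⟩ := hw
  rw [Prod.le_def] at hav hvb hav' hvb'
  have mem : ∀ p : ℤ × ℤ, max a.1 a'.1 ≤ p.1 → p.1 ≤ min b.1 b'.1 →
      max a.2 a'.2 ≤ p.2 → p.2 ≤ min b.2 b'.2 → p = w := by
    intro p h1 h2 h3 h4
    have : p ∈ Set.Icc a b ∩ Set.Icc a' b' := by
      constructor <;> constructor <;> rw [Prod.le_def] <;>
        constructor <;> simp only [le_max_iff, max_le_iff, le_min_iff, min_le_iff] at * <;> omega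
    rwa [h, Set.mem_singleton_iff] at this
  have e1 : max a.1 a'.1 = w.1 := by
    have := mem (max a.1 a'.1, w.2) le_rfl (by simp; omega) (by simp; omega) (by simp; omega)
    exact congrArg Prod.fst this
  have e2 : min b.1 b'.1 = w.1 := by
    have := mem (min b.1 b'.1, w.2) (by simp; omega) le_rfl (by simp; omega) (by simp; omega)
    exact congrArg Prod.fst this
  have e3 : max a.2 a'.2 = w.2 := by
    have := mem (w.1, max a.2 a'.2) (by simp; omega) (by simp; omega) le_rfl (by simp; omega)
    exact congrArg Prod.snd this
  have e4 : min b.2 b'.2 = w.2 := by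
    have := mem (w.1, min b.2 b'.2) (by simp; omega) (by simp; omega) (by simp; omega) le_rfl
    exact congrArg Prod.snd this
  -- coordinate dichotomies
  have c1 : (w.1 = a.1 ∧ w.1 = b'.1) ∨ (w.1 = b.1 ∧ w.1 = a'.1) := by
    rcases max_choice a.1 a'.1 with h1 | h1 <;> rcases min_choice b.1 b'.1 with h2 | h2 <;> omega
  have c2 : (w.2 = a.2 ∧ w.2 = b'.2) ∨ (w.2 = b.2 ∧ w.2 = a'.2) := by
    rcases max_choice a.2 a'.2 with h1 | h1 <;> rcases min_choice b.2 b'.2 with h2 | h2 <;> omega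
  unfold IsDiagCorner IsAntiDiagCorner
  rcases c1 with ⟨p1, q1⟩ | ⟨p1, q1⟩ <;> rcases c2 with ⟨p2, q2⟩ | ⟨p2, q2⟩
  · exact Or.inl ⟨Or.inl (Prod.ext p1 p2), Or.inr (Prod.ext q1 q2)⟩
  · exact Or.inr ⟨Or.inl (Prod.ext p1 p2), Or.inr (Prod.ext q1 q2)⟩
  · exact Or.inr ⟨Or.inr (Prod.ext p1 p2), Or.inl (Prod.ext q1 q2)⟩
  · exact Or.inl ⟨Or.inr (Prod.ext p1 p2), Or.inl (Prod.ext q1 q2)⟩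

/-- In a zig-zag collection supported by proper intervals `I 0, …, I (ℓ-1)` of `ℤ²`
(indices taken cyclically, so that `I (ℓ-1) ∩ I 0 = {v 0}` encodes `I₁ ∩ I_ℓ = {v₁}`):
consecutive intervals meet in exactly one vertex, the two meeting vertices of each
interval are one diagonal and one anti-diagonal corner of it lying on a common
horizontal or vertical edge line, and non-consecutive intervals are disjoint.
Then `ℓ` is even. -/
theorem zigzag_collection_even_length (ℓ : ℕ) (hℓ : 2 ≤ ℓ) [NeZero ℓ]
    (a b : Fin ℓ → ℤ × ℤ) (v : Fin ℓ → ℤ × ℤ)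
    (I : Fin ℓ → Set (ℤ × ℤ))
    (hI : ∀ i, I i = Set.Icc (a i) (b i))
    (hproper : ∀ i, (a i).1 < (b i).1 ∧ (a i).2 < (b i).2)
    (hdistinct : Function.Injective I)
    (hmeet : ∀ i : Fin ℓ, I i ∩ I (i + 1) = {v (i + 1)})
    (hcorners : ∀ i : Fin ℓ,
      (IsDiagCorner (a i) (b i) (v i) ∧ IsAntiDiagCorner (a i) (b i) (v (i + 1))) ∨
      (IsAntiDiagCorner (a i) (b i) (v i) ∧ IsDiagCorner (a i) (b i) (v (i + 1))))
    (hedge : ∀ i : Fin ℓ, (v i).1 = (v (i + 1)).1 ∨ (v i).2 = (v (i + 1)).2)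
    (hdisjoint : ∀ i j : Fin ℓ, j ≠ i → j ≠ i + 1 → i ≠ j + 1 → I i ∩ I j = ∅) :
    Even ℓ := by
  set f : Fin ℓ → Bool := fun i => decide (IsDiagCorner (a i) (b i) (v i)) with hf
  have step : ∀ i : Fin ℓ, f (i + 1) = ! f i := by
    intro i
    have hm := hmeet i
    rw [hI i, hI (i + 1)] at hm
    have hcm := corner_match (a i) (b i) (a (i+1)) (b (i+1)) (v (i+1))
      (hproper i) (hproper (i+1)) hm
    rcases hcorners i with ⟨hd, ha⟩ | ⟨ha, hd⟩
    · -- v i diag in I i, v (i+1) anti in I i, hence anti in I (i+1)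
      have h1 : ¬ IsDiagCorner (a i) (b i) (v (i+1)) :=
        fun hc => not_diag_and_anti _ _ _ (hproper i) ⟨hc, ha⟩
      rcases hcm with ⟨hc, _⟩ | ⟨_, hc'⟩
      · exact absurd hc h1
      · have h2 : ¬ IsDiagCorner (a (i+1)) (b (i+1)) (v (i+1)) :=
          fun hc => not_diag_and_anti _ _ _ (hproper (i+1)) ⟨hc, hc'⟩
        simp [hf, hd, h2]
    · -- v i anti in I i, v (i+1) diag in I i, hence diag in I (i+1)
      have h1 : ¬ IsDiagCorner (a i) (b i) (v i) :=
        fun hc => not_diag_and_anti _ _ _ (hproper i) ⟨hc, ha⟩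
      rcases hcm with ⟨_, hc'⟩ | ⟨hc, _⟩
      · simp [hf, h1, hc']
      · exact absurd hd fun hdd => not_diag_and_anti _ _ _ (hproper i) ⟨hdd, hc⟩
  open Fin.NatCast Fin.CommRing in
  have key : ∀ n : ℕ, f ((n : Fin ℓ)) = xor (f 0) (decide (Odd n)) := by
    intro n
    induction n with
    | zero => simp
    | succ n ih =>
      have : ((n + 1 : ℕ) : Fin ℓ) = ((n : ℕ) : Fin ℓ) + 1 := by push_cast; ring
      rw [this, step, ih]
      cases h0 : f 0 <;> by_cases ho : Odd n <;>
        simp [ho, Nat.odd_add_one, Nat.not_odd_iff_even]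
  open Fin.NatCast Fin.CommRing in
  have hl : f ((ℓ : ℕ) : Fin ℓ) = f 0 := by
    congr 1
    simp [Fin.natCast_self]
  rw [key ℓ] at hl
  have : decide (Odd ℓ) = false := by
    cases h0 : f 0 <;> cases ho : decide (Odd ℓ) <;> simp [h0, ho] at hl ⊢
  rw [← Nat.not_odd_iff_even]
  simpa using this
end

section
/- Let f = x_a x_b − x_c x_d and g = x_b x_β − x_γ x_δ be binomials in a polynomial ring over a field (all six variables a, c, d, β, γ, δ distinct from each other and from b), with a chosen monomial order for which in(f) = x_a x_b and in(g) = x_b x_β. Then the S-polynomial S(f,g) equals ±(x_a x_γ x_δ − x_β x_c x_d), and if S(f,g) reduces to 0 modulo a set G of quadratic binomials, then the initial monomial of S(f,g) is divisible by the initial monomial of some element of G that involves at most the variables {a, γ, δ} or {β, c, d}. -/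
open MvPolynomial

variable {σ : Type*} {K : Type*} [Field K]

/-- `e` is the exponent of the initial (leading) monomial of `f` w.r.t. the monomial
order `m`. -/
def IsLeadExp (m : MonomialOrder σ) (f : MvPolynomial σ K) (e : σ →₀ ℕ) : Prop :=
  e ∈ f.support ∧ ∀ e' ∈ f.support, m.toSyn e' ≤ m.toSyn e

/-- `h` reduces to `0` modulo `G` w.r.t. `m`: it has a standard expression
`h = ∑ qᵢ gᵢ` with `gᵢ ∈ G` and each `in(qᵢ gᵢ) ≼ in(h)`. -/
def ReducesToZero (m : MonomialOrder σ) (G : Set (MvPolynomial σ K))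
    (h : MvPolynomial σ K) : Prop :=
  ∃ (N : ℕ) (g : Fin N → MvPolynomial σ K) (q : Fin N → MvPolynomial σ K),
    (∀ i, g i ∈ G) ∧ h = ∑ i, q i * g i ∧
    ∀ i, ∀ ei, IsLeadExp m (q i * g i) ei →
      ∀ D, IsLeadExp m h D → m.toSyn ei ≤ m.toSyn D

lemma exists_isLeadExp (m : MonomialOrder σ) {f : MvPolynomial σ K} (hf : f ≠ 0) :
    ∃ e, IsLeadExp m f e := by
  obtain ⟨e, he, hmax⟩ := Finset.exists_max_image f.support m.toSyn
    (MvPolynomial.support_nonempty.mpr hf)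
  exact ⟨e, he, hmax⟩

lemma isLeadExp_unique {m : MonomialOrder σ} {f : MvPolynomial σ K} {e e' : σ →₀ ℕ}
    (h : IsLeadExp m f e) (h' : IsLeadExp m f e') : e = e' :=
  m.toSyn.injective (le_antisymm (h'.2 e h.1) (h.2 e' h'.1))

lemma isLeadExp_mul {m : MonomialOrder σ} {p q : MvPolynomial σ K} {ep eq' : σ →₀ ℕ}
    (hp : IsLeadExp m p ep) (hq : IsLeadExp m q eq') : IsLeadExp m (p * q) (ep + eq') := by
  classical
  have key : ∀ u v : σ →₀ ℕ, u ∈ p.support → v ∈ q.support → u + v = ep + eq' →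
      u = ep ∧ v = eq' := by
    intro u v hu hv hsum
    have hsum' : m.toSyn u + m.toSyn v = m.toSyn ep + m.toSyn eq' := by
      rw [← map_add, ← map_add, hsum]
    have h1 : m.toSyn u = m.toSyn ep :=
      le_antisymm (hp.2 u hu) (le_of_add_le_add_right (hsum' ▸ add_le_add_right (hq.2 v hv) _))
    have h2 : m.toSyn v = m.toSyn eq' := by
      rw [h1] at hsum'; exact add_left_cancel hsum'
    exact ⟨m.toSyn.injective h1, m.toSyn.injective h2⟩
  constructor
  · rw [mem_support_iff, coeff_mul, Finset.sum_eq_single (ep, eq')]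
    · exact mul_ne_zero (mem_support_iff.mp hp.1) (mem_support_iff.mp hq.1)
    · rintro ⟨u, v⟩ hmem hne
      by_contra h0
      obtain ⟨h1, h2⟩ := key u v (mem_support_iff.mpr (left_ne_zero_of_mul h0))
        (mem_support_iff.mpr (right_ne_zero_of_mul h0)) (Finset.HasAntidiagonal.mem_antidiagonal.mp hmem)
      exact hne (Prod.ext h1 h2)
    · intro h; simp at h
  · intro e' he'
    have h0 : coeff e' (p * q) ≠ 0 := mem_support_iff.mp he'
    rw [coeff_mul] at h0
    obtain ⟨⟨u, v⟩, hmem, hne⟩ := Finset.exists_ne_zero_of_sum_ne_zero h0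
    have hsum : u + v = e' := Finset.HasAntidiagonal.mem_antidiagonal.mp hmem
    have : m.toSyn e' = m.toSyn u + m.toSyn v := by rw [← map_add, hsum]
    rw [this, map_add]
    exact add_le_add (hp.2 u (mem_support_iff.mpr (left_ne_zero_of_mul hne)))
      (hq.2 v (mem_support_iff.mpr (right_ne_zero_of_mul hne)))

/-- S-polynomial computation for two inner 2-minors sharing the variable `x_b`:
`S(f,g) = x_a x_γ x_δ − x_β x_c x_d`, and if `S(f,g)` reduces to `0` modulo a set `G`
of quadratic binomials, then the initial monomial of `S(f,g)` is divisible by the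
initial monomial of some element of `G` involving only variables among `{a,γ,δ}`
or among `{β,c,d}`. -/
theorem s_polynomial_of_sharing_binomials
    (m : MonomialOrder σ) (a b c d β γ δ : σ)
    (hdistinct : ([a, b, c, d, β, γ, δ] : List σ).Nodup)
    (f g : MvPolynomial σ K)
    (hf : f = X a * X b - X c * X d) (hg : g = X b * X β - X γ * X δ)
    (hinf : IsLeadExp m f (Finsupp.single a 1 + Finsupp.single b 1))
    (hing : IsLeadExp m g (Finsupp.single b 1 + Finsupp.single β 1))
    (G : Set (MvPolynomial σ K))
    (hG : ∀ p ∈ G, ∃ d₁ d₂ : σ →₀ ℕ,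
      (d₁.sum fun _ x => x) = 2 ∧ (d₂.sum fun _ x => x) = 2 ∧
      p = monomial d₁ (1 : K) - monomial d₂ 1) :
    X β * f - X a * g = X a * X γ * X δ - X β * X c * X d ∧
    (ReducesToZero m G (X β * f - X a * g) →
      ∀ D, IsLeadExp m (X β * f - X a * g) D →
        ∃ p ∈ G, ∃ e, IsLeadExp m p e ∧ (∀ i, e i ≤ D i) ∧
          ((↑e.support ⊆ ({a, γ, δ} : Set σ)) ∨ (↑e.support ⊆ ({β, c, d} : Set σ)))) := by
  classical
  have part1 : X β * f - X a * g = X a * X γ * X δ - X β * X c * X d := by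
    subst hf hg; ring
  refine ⟨part1, ?_⟩
  rintro ⟨N, gs, qs, hmem, hsum, hlead⟩ D hD
  set E1 : σ →₀ ℕ := Finsupp.single a 1 + Finsupp.single γ 1 + Finsupp.single δ 1 with hE1
  set E2 : σ →₀ ℕ := Finsupp.single β 1 + Finsupp.single c 1 + Finsupp.single d 1 with hE2
  have hm1 : (X a * X γ * X δ : MvPolynomial σ K) = monomial E1 1 := by
    rw [hE1]; simp [X, monomial_mul]
  have hm2 : (X β * X c * X d : MvPolynomial σ K) = monomial E2 1 := by
    rw [hE2]; simp [X, monomial_mul]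
  -- D is E1 or E2
  have hDs : D ∈ (X β * f - X a * g : MvPolynomial σ K).support := hD.1
  have hcoeff : coeff D (X β * f - X a * g : MvPolynomial σ K) ≠ 0 :=
    mem_support_iff.mp hDs
  have hDcases : D = E1 ∨ D = E2 := by
    by_contra hcon
    push_neg at hcon
    apply hcoeff
    rw [part1, hm1, hm2, coeff_sub, coeff_monomial, coeff_monomial,
      if_neg (fun h => hcon.1 h.symm), if_neg (fun h => hcon.2 h.symm), sub_zero]
  -- find i with D in the support of qs i * gs i
  have hcoeff' : ∑ i, coeff D (qs i * gs i) ≠ 0 := by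
    rw [← MvPolynomial.coeff_sum, ← hsum]; exact hcoeff
  obtain ⟨i, _, hi⟩ := Finset.exists_ne_zero_of_sum_ne_zero hcoeff'
  have hP0 : qs i * gs i ≠ 0 := fun h => hi (by rw [h, coeff_zero])
  have hq0 : qs i ≠ 0 := left_ne_zero_of_mul hP0
  have hg0 : gs i ≠ 0 := right_ne_zero_of_mul hP0
  obtain ⟨eP, heP⟩ := exists_isLeadExp m hP0
  have hDP : IsLeadExp m (qs i * gs i) D := by
    have h1 : m.toSyn eP ≤ m.toSyn D := hlead i eP heP D hD
    have h2 : m.toSyn D ≤ m.toSyn eP := heP.2 D (mem_support_iff.mpr hi)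
    have : eP = D := m.toSyn.injective (le_antisymm h1 h2)
    exact this ▸ heP
  obtain ⟨eq', heq'⟩ := exists_isLeadExp m hq0
  obtain ⟨eg, heg⟩ := exists_isLeadExp m hg0
  have hDeq : D = eq' + eg := isLeadExp_unique hDP (isLeadExp_mul heq' heg)
  refine ⟨gs i, hmem i, eg, heg, ?_, ?_⟩
  · intro j
    rw [hDeq, Finsupp.add_apply]
    exact Nat.le_add_left _ _
  · have hsub : ∀ x, eg x ≠ 0 → D x ≠ 0 := by
      intro x hx
      rw [hDeq, Finsupp.add_apply]
      omega
    rcases hDcases with h1 | h2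
    · left
      intro x hx
      have hDx : D x ≠ 0 := hsub x (Finsupp.mem_support_iff.mp hx)
      rw [h1, hE1] at hDx
      simp only [Finsupp.add_apply, Finsupp.single_apply] at hDx
      simp only [Set.mem_insert_iff, Set.mem_singleton_iff]
      by_contra hcon
      push_neg at hcon
      rw [if_neg (fun h => hcon.1 h.symm), if_neg (fun h => hcon.2.1 h.symm),
        if_neg (fun h => hcon.2.2 h.symm)] at hDx
      exact hDx rfl
    · right
      intro x hx
      have hDx : D x ≠ 0 := hsub x (Finsupp.mem_support_iff.mp hx)
      rw [h2, hE2] at hDx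
      simp only [Finsupp.add_apply, Finsupp.single_apply] at hDx
      simp only [Set.mem_insert_iff, Set.mem_singleton_iff]
      by_contra hcon
      push_neg at hcon
      rw [if_neg (fun h => hcon.1 h.symm), if_neg (fun h => hcon.2.1 h.symm),
        if_neg (fun h => hcon.2.2 h.symm)] at hDx
      exact hDx rfl
end

section
/- Let P be a closed path polyomino, i.e., a sequence of cells A₁,…,A_n, A_{n+1} with n > 5, A₁ = A_{n+1}, consecutive cells sharing an edge, all A₁,…,A_n distinct, and V(A_i) ∩ V(A_j) = ∅ whenever j ∉ {i−2, i−1, i, i+1, i+2} (indices mod n). Then |V(P)| = 2n, i.e., the number of vertices of P is exactly twice the number of cells. -/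
/-- The four corner vertices of the cell with lower-left corner `c`. -/
def cellVerts (c : ℤ × ℤ) : Set (ℤ × ℤ) :=
  {c, (c.1 + 1, c.2), (c.1, c.2 + 1), (c.1 + 1, c.2 + 1)}

/-- Two cells share a common edge. -/
def AdjCells (c d : ℤ × ℤ) : Prop :=
  d - c = (1, 0) ∨ d - c = (-1, 0) ∨ d - c = (0, 1) ∨ d - c = (0, -1)

namespace CPV

def Off : Finset (ℤ × ℤ) := {(0,0), (1,0), (0,1), (1,1)}
def UF : Finset (ℤ × ℤ) := {(1,0), (-1,0), (0,1), (0,-1)}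
def SF : Finset (ℤ × ℤ) := {(2,0), (-2,0), (0,2), (0,-2)}
def DF : Finset (ℤ × ℤ) := {(1,1), (1,-1), (-1,1), (-1,-1)}

def emb (c : ℤ × ℤ) : (ℤ × ℤ) ↪ (ℤ × ℤ) := ⟨(c + ·), fun a b h => by simpa using h⟩

@[simp] lemma emb_apply (c x : ℤ × ℤ) : emb c x = c + x := rfl

def offsetOf (δ : ℤ × ℤ) : ℤ × ℤ := (if δ.1 = 1 then 1 else 0, if δ.2 = 1 then 1 else 0)

def cellF (c : ℤ × ℤ) : Finset (ℤ × ℤ) := Off.map (emb c)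

lemma coe_cellF (c : ℤ × ℤ) : (cellF c : Set (ℤ × ℤ)) = cellVerts c := by
  ext ⟨x, y⟩
  simp [cellF, Off, emb_apply, cellVerts, Prod.ext_iff]

lemma card_cellF (c : ℤ × ℤ) : (cellF c).card = 4 := by
  rw [cellF, Finset.card_map]; decide

lemma mem_cellF {x c : ℤ × ℤ} : x ∈ cellF c ↔ x - c ∈ Off := by
  simp only [cellF, Finset.mem_map, emb_apply]
  constructor
  · rintro ⟨o, ho, rfl⟩; simpa using ho
  · intro h; exact ⟨x - c, h, by ring⟩

lemma emb_trans (a b : ℤ × ℤ) : (emb a).trans (emb b) = emb (b + a) := by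
  ext x : 1
  simp [emb_apply, add_assoc]

lemma inter_eq_map (c d : ℤ × ℤ) :
    cellF c ∩ cellF d = (Off ∩ Off.map (emb (d - c))).map (emb c) := by
  have h2 : c + (d - c) = d := by ring
  calc cellF c ∩ cellF d = Off.map (emb c) ∩ Off.map (emb d) := rfl
    _ = Off.map (emb c) ∩ (Off.map (emb (d - c))).map (emb c) := by
        rw [Finset.map_map, emb_trans, h2]
    _ = _ := (Finset.map_inter _ _).symm


lemma classif : ∀ u1 ∈ UF, ∀ u2 ∈ UF, u1 + u2 = 0 ∨ u1 + u2 ∈ SF ∨ u1 + u2 ∈ DF := by decide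

lemma unit_card : ∀ u ∈ UF, (Off ∩ Off.map (emb u)).card = 2 := by decide

lemma straight_empty : ∀ δ ∈ SF, Off ∩ Off.map (emb δ) = ∅ := by decide

lemma diag_single : ∀ δ ∈ DF, Off ∩ Off.map (emb δ) = {offsetOf δ} := by decide

lemma diag_off : ∀ δ ∈ DF, offsetOf δ ∈ Off ∧ offsetOf δ - δ ∈ Off := by decide

lemma middle_mem : ∀ u1 ∈ UF, ∀ u2 ∈ UF, u1 + u2 ∈ DF → offsetOf (u1 + u2) - u1 ∈ Off := by decide

lemma unit_not_diag : ∀ u ∈ UF, u ∉ DF := by decide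


lemma adj_mem_UF {c d : ℤ × ℤ} (h : AdjCells c d) : d - c ∈ UF := by
  rcases h with h | h | h | h <;> rw [h] <;> decide

lemma adj_card {c d : ℤ × ℤ} (h : AdjCells c d) : (cellF c ∩ cellF d).card = 2 := by
  rw [inter_eq_map, Finset.card_map, unit_card _ (adj_mem_UF h)]

lemma adj_symm {c d : ℤ × ℤ} (h : AdjCells c d) : AdjCells d c := by
  rcases h with h | h | h | h
  · right; left; rw [show c - d = -(d - c) by ring, h]; rfl
  · left; rw [show c - d = -(d - c) by ring, h]; rfl
  · right; right; right; rw [show c - d = -(d - c) by ring, h]; rfl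
  · right; right; left; rw [show c - d = -(d - c) by ring, h]; rfl

lemma diag_inter {c d : ℤ × ℤ} (h : d - c ∈ DF) :
    cellF c ∩ cellF d = {c + offsetOf (d - c)} := by
  rw [inter_eq_map, diag_single _ h, Finset.map_singleton]; rfl

lemma straight_inter {c d : ℤ × ℤ} (h : d - c ∈ SF) : cellF c ∩ cellF d = ∅ := by
  rw [inter_eq_map, straight_empty _ h, Finset.map_empty]


lemma UF_neg : ∀ u ∈ UF, -u ∈ UF := by decide

lemma DF_neg : ∀ u ∈ DF, -u ∈ DF := by decide

lemma Off_card : Off.card = 4 := by decide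

end CPV


open CPV

/-- A closed path polyomino with `n` cells `A 0, …, A (n-1)` (cyclically indexed by
`ZMod n`, encoding `A₁,…,A_n, A_{n+1} = A₁`): consecutive cells share an edge, all
cells are distinct, and cells at cyclic distance more than 2 share no vertex.
Then the number of vertices of the polyomino is exactly `2n`. -/
theorem closed_path_vertex_count (n : ℕ) (hn : 5 < n) (A : ZMod n → ℤ × ℤ)
    (hadj : ∀ i : ZMod n, AdjCells (A i) (A (i + 1)))
    (hinj : Function.Injective A)
    (hfar : ∀ i j : ZMod n, j ∉ ({i - 2, i - 1, i, i + 1, i + 2} : Set (ZMod n)) →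
      cellVerts (A i) ∩ cellVerts (A j) = ∅) :
    (⋃ i : ZMod n, cellVerts (A i)).ncard = 2 * n := by
  classical
  haveI : NeZero n := ⟨by omega⟩
  -- nonzero small constants in ZMod n
  have hzk : ∀ k : ℕ, 0 < k → k < n → ((k : ZMod n) ≠ 0) := by
    intro k hk1 hk2 h
    rw [ZMod.natCast_eq_zero_iff] at h
    exact absurd (Nat.le_of_dvd hk1 h) (by omega)
  have h1z : ¬ ((1 : ZMod n) = 0) := by simpa using hzk 1 (by omega) (by omega)
  have h2z : ¬ ((2 : ZMod n) = 0) := by simpa using hzk 2 (by omega) (by omega)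
  have h3z : ¬ ((3 : ZMod n) = 0) := by simpa using hzk 3 (by omega) (by omega)
  have h4z : ¬ ((4 : ZMod n) = 0) := by simpa using hzk 4 (by omega) (by omega)
  -- the vertex set as a Finset
  set V : Finset (ℤ × ℤ) := Finset.univ.biUnion (fun i => cellF (A i)) with hVdef
  have hsub : ∀ i, cellF (A i) ⊆ V := by
    intro i
    rw [hVdef]
    exact Finset.subset_biUnion_of_mem (fun j => cellF (A j)) (Finset.mem_univ i)
  have hgoal : (⋃ i : ZMod n, cellVerts (A i)) = (V : Set (ℤ × ℤ)) := by
    rw [hVdef]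
    ext x
    simp [← coe_cellF]
  rw [hgoal, Set.ncard_coe_finset]
  -- the multiplicity of a vertex
  set c : ℤ × ℤ → ℕ :=
    fun v => (Finset.univ.filter (fun i => v ∈ cellF (A i))).card with hcdef
  -- disjointness at distance > 2, Finset version
  have hdisj : ∀ i j : ZMod n, j ∉ ({i - 2, i - 1, i, i + 1, i + 2} : Finset (ZMod n)) →
      cellF (A i) ∩ cellF (A j) = ∅ := by
    intro i j hj
    have h0 := hfar i j (by
      simp only [Finset.mem_insert, Finset.mem_singleton] at hj
      simpa using hj)
    apply Finset.coe_injective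
    rw [Finset.coe_inter, coe_cellF, coe_cellF, h0, Finset.coe_empty]
  -- two steps with a common vertex give a diagonal
  have hstep : ∀ s : ZMod n, (cellF (A s) ∩ cellF (A (s + 2))).Nonempty →
      A (s + 2) - A s ∈ DF := by
    intro s hne
    have hu1 := adj_mem_UF (hadj s)
    have hu2 := adj_mem_UF (hadj (s + 1))
    have h11 : s + 1 + 1 = s + 2 := by ring
    rw [h11] at hu2
    have hsum : (A (s + 1) - A s) + (A (s + 2) - A (s + 1)) = A (s + 2) - A s := by ring
    rcases classif _ hu1 _ hu2 with h0 | hS | hD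
    · exfalso
      rw [hsum] at h0
      have hAe : A (s + 2) = A s := by
        have := sub_eq_zero.mp h0
        exact this
      have := hinj hAe
      exact h2z (by linear_combination this)
    · exfalso
      rw [hsum] at hS
      rw [straight_inter hS] at hne
      exact Finset.not_nonempty_empty hne
    · rwa [hsum] at hD
  -- the key local lemma: two cells sharing a vertex are at cyclic distance 1 or 2
  have hE : ∀ (v : ℤ × ℤ) (s t : ZMod n), s ≠ t → v ∈ cellF (A s) → v ∈ cellF (A t) →
      (t - s = 1 ∧ A t - A s ∈ UF) ∨ (t - s = -1 ∧ A t - A s ∈ UF) ∨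
      (t - s = 2 ∧ A t - A s ∈ DF) ∨ (t - s = -2 ∧ A t - A s ∈ DF) := by
    intro v s t hst hvs hvt
    have hw : t ∈ ({s - 2, s - 1, s, s + 1, s + 2} : Set (ZMod n)) := by
      by_contra h
      have h0 := hfar s t h
      have hmem : v ∈ cellVerts (A s) ∩ cellVerts (A t) := by
        constructor
        · rw [← coe_cellF]; exact_mod_cast hvs
        · rw [← coe_cellF]; exact_mod_cast hvt
      rw [h0] at hmem
      exact hmem
    simp only [Set.mem_insert_iff, Set.mem_singleton_iff] at hw
    rcases hw with h | h | h | h | h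
    · -- t = s - 2
      right; right; right
      refine ⟨by linear_combination h, ?_⟩
      have hs2 : s = t + 2 := by linear_combination -h
      have hD : A (t + 2) - A t ∈ DF := by
        apply hstep t
        refine ⟨v, Finset.mem_inter.mpr ⟨hvt, ?_⟩⟩
        rwa [← hs2]
      rw [← hs2] at hD
      have : A t - A s = -(A s - A t) := by ring
      rw [this]
      exact DF_neg _ hD
    · -- t = s - 1
      right; left
      refine ⟨by linear_combination h, ?_⟩
      have hs1 : s = t + 1 := by linear_combination -h
      have hU : A (t + 1) - A t ∈ UF := adj_mem_UF (hadj t)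
      rw [← hs1] at hU
      have : A t - A s = -(A s - A t) := by ring
      rw [this]
      exact UF_neg _ hU
    · exact absurd h.symm hst
    · -- t = s + 1
      left
      refine ⟨by linear_combination h, ?_⟩
      rw [h]; exact adj_mem_UF (hadj s)
    · -- t = s + 2
      right; right; left
      refine ⟨by linear_combination h, ?_⟩
      rw [h]
      exact hstep s ⟨v, Finset.mem_inter.mpr ⟨hvs, by rwa [← h]⟩⟩
  -- turns
  set Turns : Finset (ZMod n) :=
    Finset.univ.filter (fun i => A (i + 2) - A i ∈ DF) with hTdef
  set g : ZMod n → ℤ × ℤ := fun i => A i + offsetOf (A (i + 2) - A i) with hgdef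
  have hmemT : ∀ i : ZMod n, i ∈ Turns ↔ A (i + 2) - A i ∈ DF := by
    intro i; rw [hTdef]; simp
  have hturn : ∀ i ∈ Turns, cellF (A i) ∩ cellF (A (i + 2)) = {g i} := by
    intro i hi
    rw [diag_inter ((hmemT i).mp hi)]
  have hnotturn : ∀ i : ZMod n, i ∉ Turns → cellF (A i) ∩ cellF (A (i + 2)) = ∅ := by
    intro i hi
    by_contra h
    exact hi ((hmemT i).mpr (hstep i (Finset.nonempty_iff_ne_empty.mpr h)))
  -- upper bound on multiplicity
  have hcle3 : ∀ v : ℤ × ℤ, c v ≤ 3 := by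
    intro v
    by_contra hlt
    push_neg at hlt
    set S := Finset.univ.filter (fun i => v ∈ cellF (A i)) with hSdef
    have hQsub : S.image A ⊆ Off.image (fun o => v - o) := by
      intro p hp
      simp only [Finset.mem_image] at hp ⊢
      obtain ⟨i, hiS, rfl⟩ := hp
      rw [hSdef] at hiS
      simp only [Finset.mem_filter, Finset.mem_univ, true_and] at hiS
      rw [mem_cellF] at hiS
      exact ⟨v - A i, hiS, by ring⟩
    have hScard : (S.image A).card = S.card := Finset.card_image_of_injective _ hinj
    have heq : S.image A = Off.image (fun o => v - o) := by
      apply Finset.eq_of_subset_of_card_le hQsub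
      have hle4 : (Off.image (fun o => v - o)).card ≤ 4 := by
        calc (Off.image (fun o => v - o)).card ≤ Off.card := Finset.card_image_le
        _ = 4 := Off_card
      have hcS : c v = S.card := rfl
      omega
    have hget : ∀ o ∈ Off, ∃ a, v ∈ cellF (A a) ∧ A a = v - o := by
      intro o ho
      have : v - o ∈ S.image A := by
        rw [heq]
        exact Finset.mem_image.mpr ⟨o, ho, rfl⟩
      obtain ⟨a, haS, ha⟩ := Finset.mem_image.mp this
      rw [hSdef] at haS
      simp only [Finset.mem_filter, Finset.mem_univ, true_and] at haS
      exact ⟨a, haS, ha⟩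
    obtain ⟨a0, hva0, ha0⟩ := hget (1, 1) (by decide)
    obtain ⟨a1, hva1, ha1⟩ := hget (1, 0) (by decide)
    obtain ⟨a2, hva2, ha2⟩ := hget (0, 1) (by decide)
    obtain ⟨a3, hva3, ha3⟩ := hget (0, 0) (by decide)
    have hp01 : A a1 - A a0 = (0, 1) := by rw [ha0, ha1]; simp [Prod.ext_iff]
    have hp02 : A a2 - A a0 = (1, 0) := by rw [ha0, ha2]; simp [Prod.ext_iff]
    have hp13 : A a3 - A a1 = (1, 0) := by rw [ha1, ha3]; simp [Prod.ext_iff]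
    have hp23 : A a3 - A a2 = (0, 1) := by rw [ha2, ha3]; simp [Prod.ext_iff]
    have hne01 : a0 ≠ a1 := fun h => by
      rw [h] at ha0; rw [ha0] at ha1
      exact absurd ha1 (by simp [Prod.ext_iff] <;> omega)
    have hne02 : a0 ≠ a2 := fun h => by
      rw [h] at ha0; rw [ha0] at ha2
      exact absurd ha2 (by simp [Prod.ext_iff] <;> omega)
    have hne13 : a1 ≠ a3 := fun h => by
      rw [h] at ha1; rw [ha1] at ha3
      exact absurd ha3 (by simp [Prod.ext_iff] <;> omega)
    have hne23 : a2 ≠ a3 := fun h => by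
      rw [h] at ha2; rw [ha2] at ha3
      exact absurd ha3 (by simp [Prod.ext_iff] <;> omega)
    have hne12 : a1 ≠ a2 := fun h => by
      rw [h] at ha1; rw [ha1] at ha2
      exact absurd ha2 (by simp [Prod.ext_iff] <;> omega)
    have hne03 : a3 ≠ a0 := fun h => by
      rw [h] at ha3; rw [ha3] at ha0
      exact absurd ha0 (by simp [Prod.ext_iff] <;> omega)
    have h01 : a1 - a0 = 1 ∨ a1 - a0 = -1 := by
      rcases hE v a0 a1 hne01 hva0 hva1 with ⟨h, _⟩ | ⟨h, _⟩ | ⟨_, h⟩ | ⟨_, h⟩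
      · exact Or.inl h
      · exact Or.inr h
      all_goals (rw [hp01] at h; exact absurd h (by decide))
    have h02 : a2 - a0 = 1 ∨ a2 - a0 = -1 := by
      rcases hE v a0 a2 hne02 hva0 hva2 with ⟨h, _⟩ | ⟨h, _⟩ | ⟨_, h⟩ | ⟨_, h⟩
      · exact Or.inl h
      · exact Or.inr h
      all_goals (rw [hp02] at h; exact absurd h (by decide))
    have h13 : a3 - a1 = 1 ∨ a3 - a1 = -1 := by
      rcases hE v a1 a3 hne13 hva1 hva3 with ⟨h, _⟩ | ⟨h, _⟩ | ⟨_, h⟩ | ⟨_, h⟩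
      · exact Or.inl h
      · exact Or.inr h
      all_goals (rw [hp13] at h; exact absurd h (by decide))
    have h23 : a3 - a2 = 1 ∨ a3 - a2 = -1 := by
      rcases hE v a2 a3 hne23 hva2 hva3 with ⟨h, _⟩ | ⟨h, _⟩ | ⟨_, h⟩ | ⟨_, h⟩
      · exact Or.inl h
      · exact Or.inr h
      all_goals (rw [hp23] at h; exact absurd h (by decide))
    rcases h01 with h01 | h01 <;> rcases h02 with h02 | h02 <;>
      rcases h13 with h13 | h13 <;> rcases h23 with h23 | h23 <;>
      first
        | exact hne12 (by linear_combination h01 - h02)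
        | exact hne03 (by linear_combination h01 + h13)
        | exact hne03 (by linear_combination h02 + h23)
        | exact h2z (by linear_combination h02 + h23 - h01 - h13)
        | exact h2z (by linear_combination h01 + h13 - h02 - h23)
        | exact h4z (by linear_combination h02 + h23 - h01 - h13)
        | exact h4z (by linear_combination h01 + h13 - h02 - h23)
  -- vertices of a turn lie in the three cells around it
  have hDof : ∀ i ∈ Turns, g i ∈ cellF (A i) ∧ g i ∈ cellF (A (i + 2)) := by
    intro i hi
    have hD := (hmemT i).mp hi
    obtain ⟨hoff1, hoff2⟩ := diag_off _ hD
    constructor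
    · rw [mem_cellF]
      have he : g i - A i = offsetOf (A (i + 2) - A i) := by simp only [hgdef]; ring
      rw [he]; exact hoff1
    · rw [mem_cellF]
      have he : g i - A (i + 2) = offsetOf (A (i + 2) - A i) - (A (i + 2) - A i) := by
        simp only [hgdef]; ring
      rw [he]; exact hoff2
  have hmid : ∀ i ∈ Turns, g i ∈ cellF (A (i + 1)) := by
    intro i hi
    have hu1 := adj_mem_UF (hadj i)
    have hu2 := adj_mem_UF (hadj (i + 1))
    have h11 : i + 1 + 1 = i + 2 := by ring
    rw [h11] at hu2
    have hsum : (A (i + 1) - A i) + (A (i + 2) - A (i + 1)) = A (i + 2) - A i := by ring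
    have hD := (hmemT i).mp hi
    have hm := middle_mem _ hu1 _ hu2 (by rw [hsum]; exact hD)
    rw [hsum] at hm
    rw [mem_cellF]
    have he : g i - A (i + 1) = offsetOf (A (i + 2) - A i) - (A (i + 1) - A i) := by
      simp only [hgdef]; ring
    rw [he]; exact hm
  -- cardinality of consecutive triples
  have hcard3 : ∀ i : ZMod n, ({i, i + 1, i + 2} : Finset (ZMod n)).card = 3 := by
    intro i
    have d1 : i ≠ i + 1 := fun h => h1z (by linear_combination -h)
    have d2 : i ≠ i + 2 := fun h => h2z (by linear_combination -h)
    have d3 : i + 1 ≠ i + 2 := fun h => h1z (by linear_combination -h)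
    rw [Finset.card_insert_of_notMem (by simp [d1, d2]),
      Finset.card_insert_of_notMem (by simp [d3]), Finset.card_singleton]
  have hsubT : ∀ i ∈ Turns, ({i, i + 1, i + 2} : Finset (ZMod n)) ⊆
      Finset.univ.filter (fun k => g i ∈ cellF (A k)) := by
    intro i hi j hj
    simp only [Finset.mem_insert, Finset.mem_singleton] at hj
    simp only [Finset.mem_filter, Finset.mem_univ, true_and]
    rcases hj with rfl | rfl | rfl
    · exact (hDof j hi).1
    · exact hmid _ hi
    · exact (hDof _ hi).2
  have hc3g : ∀ i ∈ Turns, c (g i) = 3 := by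
    intro i hi
    have h3le : 3 ≤ c (g i) := by
      have := Finset.card_le_card (hsubT i hi)
      rw [hcard3 i] at this
      exact this
    have := hcle3 (g i)
    omega
  have htrip : ∀ i ∈ Turns, ({i, i + 1, i + 2} : Finset (ZMod n)) =
      Finset.univ.filter (fun k => g i ∈ cellF (A k)) := by
    intro i hi
    apply Finset.eq_of_subset_of_card_le (hsubT i hi)
    rw [hcard3 i]
    exact hcle3 (g i)
  -- the counts of intersections
  have hτ : ∀ k : ZMod n, (cellF (A k) ∩ cellF (A (k + 2))).card =
      if k ∈ Turns then 1 else 0 := by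
    intro k
    by_cases hk : k ∈ Turns
    · rw [hturn k hk, if_pos hk, Finset.card_singleton]
    · rw [hnotturn k hk, if_neg hk, Finset.card_empty]
  have hτadj : ∀ k : ZMod n, (cellF (A k) ∩ cellF (A (k + 1))).card = 2 :=
    fun k => adj_card (hadj k)
  -- the window sum
  have hWsum : ∀ i : ZMod n,
      (∑ j : ZMod n, (cellF (A i) ∩ cellF (A j)).card) =
        8 + ((if i ∈ Turns then 1 else 0) + (if i - 2 ∈ Turns then 1 else 0)) := by
    intro i
    have d1 : i - 2 ≠ i - 1 := fun h => h1z (by linear_combination -h)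
    have d2 : i - 2 ≠ i := fun h => h2z (by linear_combination -h)
    have d3 : i - 2 ≠ i + 1 := fun h => h3z (by linear_combination -h)
    have d4 : i - 2 ≠ i + 2 := fun h => h4z (by linear_combination -h)
    have d5 : i - 1 ≠ i := fun h => h1z (by linear_combination -h)
    have d6 : i - 1 ≠ i + 1 := fun h => h2z (by linear_combination -h)
    have d7 : i - 1 ≠ i + 2 := fun h => h3z (by linear_combination -h)
    have d8 : i ≠ i + 1 := fun h => h1z (by linear_combination -h)
    have d9 : i ≠ i + 2 := fun h => h2z (by linear_combination -h)
    have d10 : i + 1 ≠ i + 2 := fun h => h1z (by linear_combination -h)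
    have hvanish : ∀ j ∈ (Finset.univ : Finset (ZMod n)),
        j ∉ ({i - 2, i - 1, i, i + 1, i + 2} : Finset (ZMod n)) →
        (cellF (A i) ∩ cellF (A j)).card = 0 := by
      intro j _ hj
      rw [hdisj i j hj, Finset.card_empty]
    rw [← Finset.sum_subset
      (Finset.subset_univ ({i - 2, i - 1, i, i + 1, i + 2} : Finset (ZMod n))) hvanish]
    rw [show ({i - 2, i - 1, i, i + 1, i + 2} : Finset (ZMod n)) =
      insert (i - 2) (insert (i - 1) (insert i (insert (i + 1) {i + 2}))) from rfl]
    rw [Finset.sum_insert (by simp [d1, d2, d3, d4]),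
        Finset.sum_insert (by simp [d5, d6, d7]),
        Finset.sum_insert (by simp [d8, d9]),
        Finset.sum_insert (by simp [d10]),
        Finset.sum_singleton]
    have e2 : i - 2 + 2 = i := by ring
    have e1 : i - 1 + 1 = i := by ring
    have t1 : (cellF (A i) ∩ cellF (A (i - 2))).card = if i - 2 ∈ Turns then 1 else 0 := by
      rw [Finset.inter_comm]
      calc (cellF (A (i - 2)) ∩ cellF (A i)).card
          = (cellF (A (i - 2)) ∩ cellF (A (i - 2 + 2))).card := by rw [e2]
        _ = _ := hτ (i - 2)
    have t2 : (cellF (A i) ∩ cellF (A (i - 1))).card = 2 := by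
      rw [Finset.inter_comm]
      calc (cellF (A (i - 1)) ∩ cellF (A i)).card
          = (cellF (A (i - 1)) ∩ cellF (A (i - 1 + 1))).card := by rw [e1]
        _ = 2 := hτadj (i - 1)
    rw [t1, t2, Finset.inter_self, card_cellF, hτadj i, hτ i]
    by_cases hA : i ∈ Turns <;> by_cases hB : i - 2 ∈ Turns <;> simp [hA, hB]
  -- counting sums
  have hc_sum : ∀ v : ℤ × ℤ, c v = ∑ i : ZMod n, (if v ∈ cellF (A i) then 1 else 0) :=
    fun v => Finset.card_filter _ _
  have hfiltV : ∀ s : Finset (ℤ × ℤ), s ⊆ V → V.filter (fun v => v ∈ s) = s := by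
    intro s hs
    apply Finset.Subset.antisymm
    · intro v hv; exact (Finset.mem_filter.mp hv).2
    · intro v hv; exact Finset.mem_filter.mpr ⟨hs hv, hv⟩
  have hsum1 : ∑ v ∈ V, c v = 4 * n := by
    calc ∑ v ∈ V, c v = ∑ v ∈ V, ∑ i : ZMod n, (if v ∈ cellF (A i) then 1 else 0) :=
          Finset.sum_congr rfl (fun v _ => hc_sum v)
      _ = ∑ i : ZMod n, ∑ v ∈ V, (if v ∈ cellF (A i) then 1 else 0) := Finset.sum_comm
      _ = ∑ i : ZMod n, (cellF (A i)).card := by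
          refine Finset.sum_congr rfl (fun i _ => ?_)
          rw [← Finset.card_filter]
          congr 1
          exact hfiltV _ (hsub i)
      _ = ∑ _i : ZMod n, 4 := Finset.sum_congr rfl (fun i _ => card_cellF _)
      _ = 4 * n := by
          rw [Finset.sum_const, Finset.card_univ, ZMod.card, smul_eq_mul, mul_comm]
  have hsum2 : ∑ v ∈ V, (c v) * (c v) = 8 * n + 2 * Turns.card := by
    have hptw : ∀ v ∈ V, (c v) * (c v) =
        ∑ i : ZMod n, ∑ j : ZMod n, (if v ∈ cellF (A i) ∧ v ∈ cellF (A j) then 1 else 0) := by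
      intro v _
      rw [hc_sum v, Finset.sum_mul_sum]
      refine Finset.sum_congr rfl (fun i _ => Finset.sum_congr rfl (fun j _ => ?_))
      by_cases h1 : v ∈ cellF (A i) <;> by_cases h2 : v ∈ cellF (A j) <;> simp [h1, h2]
    calc ∑ v ∈ V, (c v) * (c v)
        = ∑ v ∈ V, ∑ i : ZMod n, ∑ j : ZMod n,
            (if v ∈ cellF (A i) ∧ v ∈ cellF (A j) then 1 else 0) :=
          Finset.sum_congr rfl hptw
      _ = ∑ i : ZMod n, ∑ v ∈ V, ∑ j : ZMod n,
            (if v ∈ cellF (A i) ∧ v ∈ cellF (A j) then 1 else 0) := Finset.sum_comm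
      _ = ∑ i : ZMod n, ∑ j : ZMod n, ∑ v ∈ V,
            (if v ∈ cellF (A i) ∧ v ∈ cellF (A j) then 1 else 0) :=
          Finset.sum_congr rfl (fun i _ => Finset.sum_comm)
      _ = ∑ i : ZMod n, ∑ j : ZMod n, (cellF (A i) ∩ cellF (A j)).card := by
          refine Finset.sum_congr rfl (fun i _ => Finset.sum_congr rfl (fun j _ => ?_))
          rw [← Finset.card_filter]
          have hff : V.filter (fun v => v ∈ cellF (A i) ∧ v ∈ cellF (A j)) =
              cellF (A i) ∩ cellF (A j) := by
            ext v
            simp only [Finset.mem_filter, Finset.mem_inter]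
            constructor
            · rintro ⟨_, h⟩; exact h
            · intro h; exact ⟨hsub i h.1, h⟩
          rw [hff]
      _ = ∑ i : ZMod n, (8 + ((if i ∈ Turns then 1 else 0) + (if i - 2 ∈ Turns then 1 else 0))) :=
          Finset.sum_congr rfl (fun i _ => hWsum i)
      _ = 8 * n + 2 * Turns.card := by
          rw [Finset.sum_add_distrib, Finset.sum_add_distrib, Finset.sum_const,
            Finset.card_univ, ZMod.card, smul_eq_mul]
          have hre : ∑ i : ZMod n, (if i - 2 ∈ Turns then (1 : ℕ) else 0)
              = ∑ i : ZMod n, (if i ∈ Turns then (1 : ℕ) else 0) :=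
            Fintype.sum_equiv (Equiv.subRight (2 : ZMod n)) _ _ (fun i => rfl)
          have hcnt : ∑ i : ZMod n, (if i ∈ Turns then (1 : ℕ) else 0) = Turns.card := by
            rw [Finset.sum_ite_mem, Finset.univ_inter, Finset.sum_const, smul_eq_mul, mul_one]
          rw [hre, hcnt]
          ring
  -- the image description of triple vertices
  have hgx : ∀ i ∈ Turns, g i ∈ V := fun i hi => hsub i ((hDof i hi).1)
  have himg : V.filter (fun v => c v = 3) = Turns.image g := by
    ext v
    simp only [Finset.mem_filter, Finset.mem_image]
    constructor
    · rintro ⟨hvV, hc3⟩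
      have hSc : (Finset.univ.filter (fun i => v ∈ cellF (A i))).card = 3 := hc3
      obtain ⟨x, y, z, hxy, hxz, hyz, hS3⟩ := Finset.card_eq_three.mp hSc
      have hvx : v ∈ cellF (A x) := by
        have hx : x ∈ Finset.univ.filter (fun i => v ∈ cellF (A i)) := by rw [hS3]; simp
        simpa using hx
      have hvy : v ∈ cellF (A y) := by
        have hy : y ∈ Finset.univ.filter (fun i => v ∈ cellF (A i)) := by rw [hS3]; simp
        simpa using hy
      have hvz : v ∈ cellF (A z) := by
        have hz : z ∈ Finset.univ.filter (fun i => v ∈ cellF (A i)) := by rw [hS3]; simp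
        simpa using hz
      have done2 : ∀ s t : ZMod n, t - s = 2 → v ∈ cellF (A s) → v ∈ cellF (A t) →
          A t - A s ∈ DF → ∃ i ∈ Turns, g i = v := by
        intro s t hts hs ht hD
        have ht2 : t = s + 2 := by linear_combination hts
        rw [ht2] at ht hD
        refine ⟨s, (hmemT s).mpr hD, ?_⟩
        have hsing := diag_inter hD
        have hvin : v ∈ cellF (A s) ∩ cellF (A (s + 2)) := Finset.mem_inter.mpr ⟨hs, ht⟩
        rw [hsing, Finset.mem_singleton] at hvin
        simp only [hgdef]
        exact hvin.symm
      have step : ∀ s t : ZMod n, s ≠ t → v ∈ cellF (A s) → v ∈ cellF (A t) →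
          (∃ i ∈ Turns, g i = v) ∨ (t - s = 1 ∨ t - s = -1) := by
        intro s t hst hs ht
        rcases hE v s t hst hs ht with ⟨hd, _⟩ | ⟨hd, _⟩ | ⟨hd, hD⟩ | ⟨hd, hD⟩
        · exact Or.inr (Or.inl hd)
        · exact Or.inr (Or.inr hd)
        · exact Or.inl (done2 s t hd hs ht hD)
        · refine Or.inl (done2 t s (by linear_combination -hd) ht hs ?_)
          have hns : A s - A t = -(A t - A s) := by ring
          rw [hns]
          exact DF_neg _ hD
      rcases step x y hxy hvx hvy with h | hd1
      · exact h
      rcases step y z hyz hvy hvz with h | hd2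
      · exact h
      rcases step x z hxz hvx hvz with h | hd3
      · exact h
      exfalso
      rcases hd1 with hd1 | hd1 <;> rcases hd2 with hd2 | hd2 <;> rcases hd3 with hd3 | hd3 <;>
        first
          | exact h1z (by linear_combination hd1 + hd2 - hd3)
          | exact h1z (by linear_combination hd3 - hd1 - hd2)
          | exact h3z (by linear_combination hd1 + hd2 - hd3)
          | exact h3z (by linear_combination hd3 - hd1 - hd2)
    · rintro ⟨i, hi, rfl⟩
      exact ⟨hgx i hi, hc3g i hi⟩
  have hinjOn : Set.InjOn g ↑Turns := by
    intro i hi' j hj' hgij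
    have hi : i ∈ Turns := hi'
    have hj : j ∈ Turns := hj'
    have tripi := htrip i hi
    have tripj := htrip j hj
    rw [← hgij] at tripj
    have hij : ({i, i + 1, i + 2} : Finset (ZMod n)) = {j, j + 1, j + 2} :=
      tripi.trans tripj.symm
    have hij' : i ∈ ({j, j + 1, j + 2} : Finset (ZMod n)) := by rw [← hij]; simp
    have hji' : j ∈ ({i, i + 1, i + 2} : Finset (ZMod n)) := by rw [hij]; simp
    simp only [Finset.mem_insert, Finset.mem_singleton] at hij' hji'
    rcases hij' with h | h | h <;> rcases hji' with h' | h' | h' <;>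
      first
        | exact h
        | exact h'.symm
        | exact absurd (show (2 : ZMod n) = 0 by linear_combination -h - h') h2z
        | exact absurd (show (3 : ZMod n) = 0 by linear_combination -h - h') h3z
        | exact absurd (show (4 : ZMod n) = 0 by linear_combination -h - h') h4z
  have ht3 : (V.filter (fun v => c v = 3)).card = Turns.card := by
    rw [himg, Finset.card_image_of_injOn hinjOn]
  -- lower bound on multiplicity
  have hge1 : ∀ v ∈ V, 1 ≤ c v := by
    intro v hv
    rw [hVdef] at hv
    obtain ⟨i, _, hvi⟩ := Finset.mem_biUnion.mp hv
    exact Finset.card_pos.mpr ⟨i, Finset.mem_filter.mpr ⟨Finset.mem_univ _, hvi⟩⟩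
  -- the final count
  have hkey : ∀ v ∈ V, 2 + (c v) * (c v) = 3 * (c v) + 2 * (if c v = 3 then 1 else 0) := by
    intro v hv
    have h1 := hge1 v hv
    have h3 := hcle3 v
    have hval : c v = 1 ∨ c v = 2 ∨ c v = 3 := by omega
    rcases hval with h | h | h <;> rw [h] <;> norm_num
  have hbig : ∑ v ∈ V, (2 + (c v) * (c v)) =
      ∑ v ∈ V, (3 * (c v) + 2 * (if c v = 3 then 1 else 0)) :=
    Finset.sum_congr rfl hkey
  have lhs_eq : ∑ v ∈ V, (2 + (c v) * (c v)) = 2 * V.card + (8 * n + 2 * Turns.card) := by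
    rw [Finset.sum_add_distrib, hsum2, Finset.sum_const, smul_eq_mul, mul_comm]
  have rhs_eq : ∑ v ∈ V, (3 * (c v) + 2 * (if c v = 3 then 1 else 0)) =
      3 * (4 * n) + 2 * Turns.card := by
    rw [Finset.sum_add_distrib, ← Finset.mul_sum, hsum1, ← Finset.mul_sum,
      ← Finset.card_filter, ht3]
  rw [lhs_eq, rhs_eq] at hbig
  omega
end
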